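/- arXiv:1309.1050 — 6 statements merged into one kernel-verified Lean document; each statement's English description precedes it below -/
import Mathlib

section
/- Let ε, C₁, C₂, c be positive real numbers with c·C₂·ε² < C₁. Let H : [0,ε) → ℝ be continuous with H(0) = 0 and differentiable on (0,ε), and let φ, ξ : [0,ε) → ℝ be continuous functions satisfying φ(t) ≥ C₁ and 0 ≤ ξ(t) ≤ C₂ for all t ∈ [0,ε). If H'(t) ≤ (c/φ(t))·∫₀ᵗ H(s)·ξ(s) ds for all t ∈ (0,ε), then H(t) ≤ 0 for all t ∈ [0,ε). -/
/-- Gronwall-type inequality: if `H' (t) ≤ (c/φ(t)) ∫₀ᵗ H ξ` with `φ ≥ C₁ > 0`,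
`0 ≤ ξ ≤ C₂` and `c C₂ ε² < C₁`, `H(0) = 0`, then `H ≤ 0` on `[0, ε)`. -/
theorem gronwall_type_ineq
    (ε C₁ C₂ c : ℝ) (hε : 0 < ε) (hC₁ : 0 < C₁) (hC₂ : 0 < C₂) (hc : 0 < c)
    (hsmall : c * C₂ * ε ^ 2 < C₁)
    (H φ ξ : ℝ → ℝ)
    (hHcont : ContinuousOn H (Set.Ico 0 ε))
    (hH0 : H 0 = 0)
    (hHdiff : ∀ t ∈ Set.Ioo (0 : ℝ) ε, DifferentiableAt ℝ H t)
    (hφcont : ContinuousOn φ (Set.Ico 0 ε))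
    (hξcont : ContinuousOn ξ (Set.Ico 0 ε))
    (hφ : ∀ t ∈ Set.Ico (0 : ℝ) ε, C₁ ≤ φ t)
    (hξ0 : ∀ t ∈ Set.Ico (0 : ℝ) ε, 0 ≤ ξ t)
    (hξC : ∀ t ∈ Set.Ico (0 : ℝ) ε, ξ t ≤ C₂)
    (hineq : ∀ t ∈ Set.Ioo (0 : ℝ) ε,
      deriv H t ≤ (c / φ t) * ∫ s in (0 : ℝ)..t, H s * ξ s) :
    ∀ t ∈ Set.Ico (0 : ℝ) ε, H t ≤ 0 := by
  intro t₀ ht₀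
  by_contra hpos
  push_neg at hpos
  have ht₀0 : (0 : ℝ) ≤ t₀ := ht₀.1
  have ht₀ε : t₀ < ε := ht₀.2
  have hsub : Set.Icc (0 : ℝ) t₀ ⊆ Set.Ico 0 ε := fun x hx =>
    ⟨hx.1, lt_of_le_of_lt hx.2 ht₀ε⟩
  obtain ⟨t₁, ht₁mem, ht₁max⟩ :=
    isCompact_Icc.exists_isMaxOn (Set.nonempty_Icc.2 ht₀0) (hHcont.mono hsub)
  have hM : 0 < H t₁ := lt_of_lt_of_le hpos (ht₁max ⟨ht₀0, le_refl t₀⟩)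
  have ht₁pos : 0 < t₁ := by
    rcases ht₁mem.1.lt_or_eq with h | h
    · exact h
    · exfalso; rw [← h, hH0] at hM; exact lt_irrefl 0 hM
  have ht₁ε : t₁ < ε := lt_of_le_of_lt ht₁mem.2 ht₀ε
  have hsub1 : Set.Icc (0 : ℝ) t₁ ⊆ Set.Ico 0 ε := fun x hx =>
    ⟨hx.1, lt_of_le_of_lt hx.2 ht₁ε⟩
  obtain ⟨τ, hτ, hderiv⟩ := exists_deriv_eq_slope H ht₁pos (hHcont.mono hsub1)
    (fun x hx => (hHdiff x ⟨hx.1, lt_trans hx.2 ht₁ε⟩).differentiableWithinAt)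
  have hτε : τ ∈ Set.Ioo (0 : ℝ) ε := ⟨hτ.1, lt_trans hτ.2 ht₁ε⟩
  have hτt₀ : Set.Icc (0 : ℝ) τ ⊆ Set.Icc 0 t₀ := fun x hx =>
    ⟨hx.1, le_trans hx.2 (le_trans hτ.2.le ht₁mem.2)⟩
  -- integral bound
  have hintg : IntervalIntegrable (fun s => H s * ξ s) MeasureTheory.volume 0 τ := by
    apply ContinuousOn.intervalIntegrable
    rw [Set.uIcc_of_le hτ.1.le]
    exact (hHcont.mono (fun x hx => hsub (hτt₀ hx))).mul (hξcont.mono (fun x hx => hsub (hτt₀ hx)))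
  have hint : (∫ s in (0 : ℝ)..τ, H s * ξ s) ≤ H t₁ * C₂ * τ := by
    have hle : ∀ s ∈ Set.Icc (0 : ℝ) τ, H s * ξ s ≤ H t₁ * C₂ := by
      intro s hs
      have hsε : s ∈ Set.Ico (0 : ℝ) ε := hsub (hτt₀ hs)
      have h1 : H s ≤ H t₁ := ht₁max (hτt₀ hs)
      calc H s * ξ s ≤ H t₁ * ξ s := mul_le_mul_of_nonneg_right h1 (hξ0 s hsε)
        _ ≤ H t₁ * C₂ := mul_le_mul_of_nonneg_left (hξC s hsε) hM.le
    calc (∫ s in (0 : ℝ)..τ, H s * ξ s) ≤ ∫ _s in (0 : ℝ)..τ, H t₁ * C₂ :=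
          intervalIntegral.integral_mono_on hτ.1.le hintg intervalIntegrable_const hle
      _ = H t₁ * C₂ * τ := by simp; ring
  have hφτ : C₁ ≤ φ τ := hφ τ ⟨hτε.1.le, hτε.2⟩
  have hφτpos : 0 < φ τ := lt_of_lt_of_le hC₁ hφτ
  have hd : deriv H τ = H t₁ / t₁ := by rw [hderiv, hH0]; ring_nf
  have h1 := hineq τ hτε
  have step1 : φ τ * deriv H τ ≤ c * ∫ s in (0 : ℝ)..τ, H s * ξ s := by
    rw [div_mul_eq_mul_div, le_div_iff₀ hφτpos] at h1
    linarith [h1]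
  have step2 : φ τ * deriv H τ ≤ c * (H t₁ * C₂ * τ) :=
    le_trans step1 (mul_le_mul_of_nonneg_left hint hc.le)
  have hdpos : 0 < deriv H τ := by rw [hd]; positivity
  have step3 : C₁ * deriv H τ ≤ c * (H t₁ * C₂ * τ) :=
    le_trans (mul_le_mul_of_nonneg_right hφτ hdpos.le) step2
  rw [hd, ← mul_div_assoc, div_le_iff₀ ht₁pos] at step3
  have hτlt : τ < ε := hτε.2
  nlinarith [mul_pos hM ht₁pos, mul_pos hc hC₂, mul_pos (mul_pos hc hC₂) hM,
    mul_lt_mul_of_pos_left ht₁ε (mul_pos (mul_pos (mul_pos hc hC₂) hM) hτε.1),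
    mul_lt_mul_of_pos_left hτlt (mul_pos (mul_pos (mul_pos hc hC₂) hM) hε)]
end

section
/- Let n ≥ 4 be an integer and define u, w : ℝ → ℝ by u(t) = (1+(n−3)t⁴)⁻¹ and w(t) = 1+2t⁴+2t⁸. Then there exist constants C > 0 and δ > 0 such that for all t with |t| < δ, |2·u''(t)/u(t) + (n−3)·w''(t)/w(t)| ≤ C·t⁶. In particular this quantity vanishes at t = 0. -/
set_option maxHeartbeats 1000000


/-- For `u(t) = (1+(n-3)t⁴)⁻¹`, `w(t) = 1+2t⁴+2t⁸` and `n ≥ 4`, the quantity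
`2u''/u + (n-3)w''/w` is `O(t⁶)` near `0`, and in particular vanishes at `t = 0`. -/
theorem normal_ricci_order_case1
    (n : ℕ) (hn : 4 ≤ n) (u w : ℝ → ℝ)
    (hu : u = fun t => (1 + ((n : ℝ) - 3) * t ^ 4)⁻¹)
    (hw : w = fun t => 1 + 2 * t ^ 4 + 2 * t ^ 8) :
    (∃ C > (0 : ℝ), ∃ δ > (0 : ℝ), ∀ t : ℝ, |t| < δ →
        |2 * deriv (deriv u) t / u t + ((n : ℝ) - 3) * deriv (deriv w) t / w t|
          ≤ C * t ^ 6) ∧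
      2 * deriv (deriv u) 0 / u 0 + ((n : ℝ) - 3) * deriv (deriv w) 0 / w 0 = 0 := by
  set a : ℝ := (n : ℝ) - 3 with ha_def
  have ha : (1 : ℝ) ≤ a := by
    have : (4 : ℝ) ≤ (n : ℝ) := by exact_mod_cast hn
    simp only [ha_def]; linarith
  have hApos : ∀ t : ℝ, 0 < 1 + a * t ^ 4 := by
    intro t
    have h4 : 0 ≤ t ^ 4 := by positivity
    nlinarith
  have hBpos : ∀ t : ℝ, 0 < 1 + 2 * t ^ 4 + 2 * t ^ 8 := by
    intro t; positivity
  -- first derivative of u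
  have hg : ∀ t : ℝ, HasDerivAt (fun t : ℝ => 1 + a * t ^ 4) (a * (4 * t ^ 3)) t := by
    intro t
    have h := ((hasDerivAt_pow 4 t).const_mul a).const_add 1
    exact h.congr_deriv (by push_cast; ring)
  have hu1 : ∀ t : ℝ, HasDerivAt u (-(a * (4 * t ^ 3)) / (1 + a * t ^ 4) ^ 2) t := by
    intro t
    rw [hu]
    exact (hg t).inv (hApos t).ne'
  have du : deriv u = fun t : ℝ => -(a * (4 * t ^ 3)) / (1 + a * t ^ 4) ^ 2 := by
    funext t; exact (hu1 t).deriv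
  -- second derivative of u
  have hnum : ∀ t : ℝ, HasDerivAt (fun t : ℝ => -(a * (4 * t ^ 3))) (-(a * (12 * t ^ 2))) t := by
    intro t
    have h := ((hasDerivAt_pow 3 t).const_mul a).neg.const_mul (4 : ℝ)
    have heq : (fun t : ℝ => -(a * (4 * t ^ 3))) = fun t : ℝ => 4 * -(a * t ^ 3) := by
      funext s; ring
    rw [heq]
    exact h.congr_deriv (by push_cast; ring)
  have hden : ∀ t : ℝ, HasDerivAt (fun t : ℝ => (1 + a * t ^ 4) ^ 2)
      (2 * (1 + a * t ^ 4) ^ 1 * (a * (4 * t ^ 3))) t := by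
    intro t
    have h := (hg t).pow 2
    exact h.congr_deriv (by norm_num)
  have hu2 : ∀ t : ℝ, HasDerivAt (deriv u)
      ((-(a * (12 * t ^ 2)) * (1 + a * t ^ 4) ^ 2 -
        -(a * (4 * t ^ 3)) * (2 * (1 + a * t ^ 4) ^ 1 * (a * (4 * t ^ 3)))) /
          ((1 + a * t ^ 4) ^ 2) ^ 2) t := by
    intro t
    rw [du]
    exact (hnum t).div (hden t) (by positivity)
  have d2u : ∀ t : ℝ, deriv (deriv u) t =
      (-(a * (12 * t ^ 2)) * (1 + a * t ^ 4) ^ 2 -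
        -(a * (4 * t ^ 3)) * (2 * (1 + a * t ^ 4) ^ 1 * (a * (4 * t ^ 3)))) /
          ((1 + a * t ^ 4) ^ 2) ^ 2 := fun t => (hu2 t).deriv
  -- derivatives of w
  have hw1 : ∀ t : ℝ, HasDerivAt w (8 * t ^ 3 + 16 * t ^ 7) t := by
    intro t
    rw [hw]
    have h := (((hasDerivAt_pow 4 t).const_mul 2).const_add 1).add
      ((hasDerivAt_pow 8 t).const_mul 2)
    exact h.congr_deriv (by push_cast; ring)
  have dw : deriv w = fun t : ℝ => 8 * t ^ 3 + 16 * t ^ 7 := by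
    funext t; exact (hw1 t).deriv
  have hw2 : ∀ t : ℝ, HasDerivAt (deriv w) (24 * t ^ 2 + 112 * t ^ 6) t := by
    intro t
    rw [dw]
    have h := ((hasDerivAt_pow 3 t).const_mul 8).add ((hasDerivAt_pow 7 t).const_mul 16)
    exact h.congr_deriv (by push_cast; ring)
  have d2w : ∀ t : ℝ, deriv (deriv w) t = 24 * t ^ 2 + 112 * t ^ 6 := fun t => (hw2 t).deriv
  -- the key identity
  have key : ∀ t : ℝ,
      2 * deriv (deriv u) t / u t + a * deriv (deriv w) t / w t =
        t ^ 6 * ((64 * a + 88 * a ^ 2) + (304 * a ^ 2 + 24 * a ^ 3 - 48 * a) * t ^ 4 +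
          (80 * a ^ 2 + 112 * a ^ 3) * t ^ 8) /
          ((1 + a * t ^ 4) ^ 2 * (1 + 2 * t ^ 4 + 2 * t ^ 8)) := by
    intro t
    rw [d2u t, d2w t, hu, hw]
    have hA := (hApos t).ne'
    have hB := (hBpos t).ne'
    field_simp
    ring
  have hmain : ∀ t : ℝ, |t| < 1 →
      |2 * deriv (deriv u) t / u t + a * deriv (deriv w) t / w t| ≤
        (16 * a + 472 * a ^ 2 + 136 * a ^ 3) * t ^ 6 := by
    intro t ht
    rw [key t]
    have ht4 : t ^ 4 ≤ 1 := by
      have h1 : |t| ^ 4 ≤ 1 := pow_le_one₀ (abs_nonneg t) ht.le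
      calc t ^ 4 = |t ^ 4| := (abs_of_nonneg (by positivity)).symm
        _ = |t| ^ 4 := abs_pow t 4
        _ ≤ 1 := h1
    have ht4' : (0:ℝ) ≤ t ^ 4 := by positivity
    have ht8 : t ^ 8 ≤ 1 := by nlinarith
    have ht8' : (0:ℝ) ≤ t ^ 8 := by positivity
    set P : ℝ := (64 * a + 88 * a ^ 2) + (304 * a ^ 2 + 24 * a ^ 3 - 48 * a) * t ^ 4 +
      (80 * a ^ 2 + 112 * a ^ 3) * t ^ 8 with hP_def
    set D : ℝ := (1 + a * t ^ 4) ^ 2 * (1 + 2 * t ^ 4 + 2 * t ^ 8) with hD_def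
    have hPnn : 0 ≤ P := by
      have hc1 : 0 ≤ 304 * a ^ 2 + 24 * a ^ 3 - 48 * a := by nlinarith
      have : 0 ≤ (304 * a ^ 2 + 24 * a ^ 3 - 48 * a) * t ^ 4 := mul_nonneg hc1 ht4'
      nlinarith
    have hPC : P ≤ 16 * a + 472 * a ^ 2 + 136 * a ^ 3 := by
      have hc1 : 0 ≤ 304 * a ^ 2 + 24 * a ^ 3 - 48 * a := by nlinarith
      have hc2 : (0:ℝ) ≤ 80 * a ^ 2 + 112 * a ^ 3 := by nlinarith
      have h1 : (304 * a ^ 2 + 24 * a ^ 3 - 48 * a) * t ^ 4 ≤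
          304 * a ^ 2 + 24 * a ^ 3 - 48 * a := by nlinarith
      have h2 : (80 * a ^ 2 + 112 * a ^ 3) * t ^ 8 ≤ 80 * a ^ 2 + 112 * a ^ 3 := by nlinarith
      simp only [hP_def]; linarith
    have hD1 : 1 ≤ D := by
      have hA := hApos t
      have := ht4'
      simp only [hD_def]; nlinarith
    have ht6 : (0:ℝ) ≤ t ^ 6 := by positivity
    have hnn : 0 ≤ t ^ 6 * P / D := by positivity
    rw [abs_of_nonneg hnn]
    calc t ^ 6 * P / D ≤ t ^ 6 * P := div_le_self (by positivity) hD1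
      _ ≤ t ^ 6 * (16 * a + 472 * a ^ 2 + 136 * a ^ 3) :=
          mul_le_mul_of_nonneg_left hPC ht6
      _ = (16 * a + 472 * a ^ 2 + 136 * a ^ 3) * t ^ 6 := by ring
  constructor
  · exact ⟨16 * a + 472 * a ^ 2 + 136 * a ^ 3, by nlinarith, 1, one_pos, hmain⟩
  · have h0 := hmain 0 (by norm_num)
    simp only [ne_eq, OfNat.ofNat_ne_zero, not_false_eq_true, zero_pow, mul_zero] at h0
    have := abs_nonneg (2 * deriv (deriv u) 0 / u 0 + a * deriv (deriv w) 0 / w 0)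
    have heq : |2 * deriv (deriv u) 0 / u 0 + a * deriv (deriv w) 0 / w 0| = 0 := le_antisymm h0 this
    exact abs_eq_zero.mp heq
end

section
/- Let n ≥ 4 be an integer and define u, w : ℝ → ℝ by u(t) = (1+(n−3)t⁴)⁻¹ and w(t) = 1+2t⁴+2t⁸. Define S(t) = 2/u(t)² − (4·u''(t)/u(t) + 2(n−3)·w''(t)/w(t)) − 2·u'(t)²/u(t)² − (n−3)(n−4)·w'(t)²/w(t)² − 4(n−3)·u'(t)w'(t)/(u(t)w(t)). Then S(0) = 2 and there exists δ > 0 such that S(t) ≥ 2 for all t with |t| < δ. -/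
set_option maxHeartbeats 4000000 in
/-- Scalar curvature lower bound in Case 1 (`S₀ = 2`) of Proposition 6:
with `u(t) = (1+(n-3)t⁴)⁻¹` and `w(t) = 1+2t⁴+2t⁸`, the scalar curvature expression
`S(t)` satisfies `S(0) = 2` and `S(t) ≥ 2` near `t = 0`. -/
theorem scalar_curvature_case1
    (n : ℕ) (hn : 4 ≤ n) (u w S : ℝ → ℝ)
    (hu : u = fun t => (1 + ((n : ℝ) - 3) * t ^ 4)⁻¹)
    (hw : w = fun t => 1 + 2 * t ^ 4 + 2 * t ^ 8)
    (hS : S = fun t =>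
      2 / (u t) ^ 2
        - (4 * deriv (deriv u) t / u t + 2 * ((n : ℝ) - 3) * deriv (deriv w) t / w t)
        - 2 * (deriv u t) ^ 2 / (u t) ^ 2
        - ((n : ℝ) - 3) * ((n : ℝ) - 4) * (deriv w t) ^ 2 / (w t) ^ 2
        - 4 * ((n : ℝ) - 3) * (deriv u t * deriv w t) / (u t * w t)) :
    S 0 = 2 ∧ ∃ δ > (0 : ℝ), ∀ t : ℝ, |t| < δ → 2 ≤ S t := by
  set a : ℝ := (n : ℝ) - 3 with ha_def
  have ha : (1 : ℝ) ≤ a := by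
    have : (4 : ℝ) ≤ (n : ℝ) := by exact_mod_cast hn
    simp only [ha_def]; linarith
  have ha0 : (0 : ℝ) < a := lt_of_lt_of_le one_pos ha
  have hv : ∀ t : ℝ, 0 < 1 + a * t ^ 4 := by
    intro t
    have h4 : (0 : ℝ) ≤ t ^ 4 := by positivity
    nlinarith
  have hwpos : ∀ t : ℝ, 0 < w t := by
    intro t; rw [hw]; positivity
  -- first derivative of u
  have hvd : ∀ t : ℝ, HasDerivAt (fun s : ℝ => 1 + a * s ^ 4) (a * (4 * t ^ 3)) t := by
    intro t
    have h := ((hasDerivAt_pow 4 t).const_mul a).const_add 1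
    simpa using h
  have hud : ∀ t : ℝ, HasDerivAt u (-(a * (4 * t ^ 3)) / (1 + a * t ^ 4) ^ 2) t := by
    intro t
    have h := (hvd t).inv (ne_of_gt (hv t))
    rw [hu]
    simp [div_eq_mul_inv] at h; exact h.congr_deriv (by ring)
  have hderivu : deriv u = fun t => -(a * (4 * t ^ 3)) / (1 + a * t ^ 4) ^ 2 :=
    funext fun t => (hud t).deriv
  -- second derivative of u
  have hudd : ∀ t : ℝ, deriv (deriv u) t
      = (-12 * a * t ^ 2 + 20 * a ^ 2 * t ^ 6) / (1 + a * t ^ 4) ^ 3 := by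
    intro t
    have h1 : HasDerivAt (fun s : ℝ => -(a * (4 * s ^ 3))) (-(a * (4 * (3 * t ^ 2)))) t := by
      have h := (((hasDerivAt_pow 3 t).const_mul 4).const_mul a).neg
      simp [mul_assoc] at h; exact h
    have h2 : HasDerivAt (fun s : ℝ => (((1 + a * s ^ 4) ^ 2))⁻¹)
        (-(2 * (1 + a * t ^ 4) ^ 1 * (a * (4 * t ^ 3))) / ((1 + a * t ^ 4) ^ 2) ^ 2) t := by
      have h := ((hvd t).pow 2).inv (pow_ne_zero 2 (ne_of_gt (hv t)))
      simp at h; exact h.congr_deriv (by ring)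
    have h3 := h1.mul h2
    have heq : deriv u = fun s : ℝ => -(a * (4 * s ^ 3)) * (((1 + a * s ^ 4) ^ 2))⁻¹ := by
      rw [hderivu]; funext s; rw [div_eq_mul_inv]
    rw [heq, show (fun s : ℝ => -(a * (4 * s ^ 3)) * ((1 + a * s ^ 4) ^ 2)⁻¹) = ((fun s : ℝ => -(a * (4 * s ^ 3))) * fun s => ((1 + a * s ^ 4) ^ 2)⁻¹) from rfl, h3.deriv]
    have hvne : (1 + a * t ^ 4) ≠ 0 := ne_of_gt (hv t)
    field_simp
    ring
  -- derivatives of w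
  have hwd1 : ∀ t : ℝ, HasDerivAt w (8 * t ^ 3 + 16 * t ^ 7) t := by
    intro t
    rw [hw]
    have h := (((hasDerivAt_pow 4 t).const_mul 2).const_add 1).add ((hasDerivAt_pow 8 t).const_mul 2)
    exact h.congr_deriv (by push_cast; ring)
  have hderivw : deriv w = fun t => 8 * t ^ 3 + 16 * t ^ 7 := funext fun t => (hwd1 t).deriv
  have hwdd : ∀ t : ℝ, deriv (deriv w) t = 24 * t ^ 2 + 112 * t ^ 6 := by
    intro t
    rw [hderivw]
    have h := ((hasDerivAt_pow 3 t).const_mul 8).add ((hasDerivAt_pow 7 t).const_mul 16)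
    have h' : HasDerivAt (fun s : ℝ => 8 * s ^ 3 + 16 * s ^ 7) (24 * t ^ 2 + 112 * t ^ 6) t := by
      exact h.congr_deriv (by push_cast; ring)
    exact h'.deriv
  -- the polynomial Q
  set Q : ℝ → ℝ := fun t =>
    4*a + (-64)*a*t^2 + (-144)*a^2*t^2 + 16*a*t^4 + 10*a^2*t^4 + 96*a*t^6 + (-704)*a^2*t^6
    + (-48)*a^3*t^6 + 32*a*t^8 + 40*a^2*t^8 + 8*a^3*t^8 + 192*a*t^10 + (-960)*a^2*t^10
    + (-256)*a^3*t^10 + (-64)*a^4*t^10 + 32*a*t^12 + 80*a^2*t^12 + 32*a^3*t^12 + 2*a^4*t^12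
    + 192*a*t^14 + (-768)*a^2*t^14 + (-32)*a^3*t^14 + (-256)*a^4*t^14 + 16*a*t^16
    + 80*a^2*t^16 + 64*a^3*t^16 + 8*a^4*t^16 + (-448)*a^2*t^18 + 320*a^3*t^18
    + (-256)*a^4*t^18 + 40*a^2*t^20 + 64*a^3*t^20 + 16*a^4*t^20 + 32*a^3*t^24
    + 16*a^4*t^24 + 8*a^4*t^28 with hQ_def
  -- key algebraic identity
  have key : ∀ t : ℝ, S t - 2 = t ^ 4 * Q t / ((1 + a * t ^ 4) ^ 2 * (w t) ^ 2) := by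
    intro t
    have hvne : (1 + a * t ^ 4) ≠ 0 := ne_of_gt (hv t)
    have hwne : w t ≠ 0 := ne_of_gt (hwpos t)
    have hune : u t ≠ 0 := by rw [hu]; exact inv_ne_zero hvne
    rw [hS]
    simp only
    rw [hudd, hwdd, hderivu, hderivw, hQ_def, hu, hw]
    simp only
    rw [hw] at hwne
    field_simp
    ring
  have hQ0 : Q 0 = 4 * a := by simp [hQ_def]
  have hQcont : ContinuousAt Q 0 := by fun_prop
  obtain ⟨δ, hδpos, hδ⟩ := Metric.continuousAt_iff.mp hQcont (2 * a) (by linarith)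
  constructor
  · have h0 := key 0
    simp at h0
    linarith
  · refine ⟨δ, hδpos, fun t ht => ?_⟩
    have hdist : dist t 0 < δ := by simpa [Real.dist_eq] using ht
    have hQt : 0 < Q t := by
      have := hδ hdist
      rw [Real.dist_eq, hQ0] at this
      have := abs_lt.mp this
      linarith [this.1]
    have hnum : 0 ≤ t ^ 4 * Q t := mul_nonneg (by positivity) hQt.le
    have hden : 0 < (1 + a * t ^ 4) ^ 2 * (w t) ^ 2 := by
      have := hv t; have := hwpos t; positivity
    have := key t
    nlinarith [div_nonneg hnum hden.le]
end

section
/- Let n ≥ 4 be an integer and define u, w : ℝ → ℝ by u(t) = (1+(n−3)t⁴)⁻¹ and w(t) = 1+2t⁴+2t⁸. Then for every real t > 0, 2·u'(t)/u(t) + (n−3)·w'(t)/w(t) > 0. -/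
/-- Mean curvature positivity in Case 1 of Proposition 6: with
`u(t) = (1+(n-3)t⁴)⁻¹` and `w(t) = 1+2t⁴+2t⁸`, for every `t > 0`,
`2u'/u + (n-3)w'/w > 0`. -/
theorem mean_curvature_positive_case1
    (n : ℕ) (hn : 4 ≤ n) (u w : ℝ → ℝ)
    (hu : u = fun t => (1 + ((n : ℝ) - 3) * t ^ 4)⁻¹)
    (hw : w = fun t => 1 + 2 * t ^ 4 + 2 * t ^ 8)
    (t : ℝ) (ht : 0 < t) :
    0 < 2 * deriv u t / u t + ((n : ℝ) - 3) * deriv w t / w t := by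
  set m : ℝ := (n : ℝ) - 3 with hm
  have hm1 : (1 : ℝ) ≤ m := by
    have : (4 : ℝ) ≤ (n : ℝ) := by exact_mod_cast hn
    simp [hm]; linarith
  have ht4 : 0 < t ^ 4 := by positivity
  have hA : (0:ℝ) < 1 + m * t ^ 4 := by nlinarith
  have hB : (0:ℝ) < 1 + 2 * t ^ 4 + 2 * t ^ 8 := by positivity
  have hg : HasDerivAt (fun s : ℝ => 1 + m * s ^ 4) (m * (4 * t ^ 3)) t := by
    simpa using ((hasDerivAt_pow 4 t).const_mul m).const_add 1
  have hu' : deriv u t = -(m * (4 * t ^ 3)) / (1 + m * t ^ 4) ^ 2 := by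
    rw [hu]
    exact (hg.inv hA.ne').deriv
  have hw' : deriv w t = 8 * t ^ 3 + 16 * t ^ 7 := by
    rw [hw]
    have : HasDerivAt (fun s : ℝ => 1 + 2 * s ^ 4 + 2 * s ^ 8)
        (2 * (4 * t ^ 3) + 2 * (8 * t ^ 7)) t := by
      simpa [Pi.add_def] using (((hasDerivAt_pow 4 t).const_mul 2).const_add 1).add
        ((hasDerivAt_pow 8 t).const_mul 2)
    rw [this.deriv]; ring
  rw [hu', hw', hu, hw]
  simp only
  rw [div_add_div _ _ (by positivity : ((1 + m * t ^ 4)⁻¹ : ℝ) ≠ 0) hB.ne']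
  apply div_pos
  · field_simp
    have hm0 : (0:ℝ) < m := lt_of_lt_of_le one_pos hm1
    nlinarith [mul_pos (mul_pos hm0 hA) (pow_pos ht 7),
      mul_nonneg (mul_nonneg (mul_nonneg hm0.le hA.le) (sub_nonneg.2 hm1)) (pow_pos ht 11).le]
  · positivity
end

section
/- Let n ≥ 5 be an integer and define u, w : ℝ → ℝ by u(t) = 1+2t⁴+2t⁸ and w(t) = (1+(n−3)t⁴)⁻¹. Then for every real t > 0, (n−3)·u'(t)/u(t) + 2·w'(t)/w(t) > 0. -/
/-- Mean curvature positivity in Case 3 of Proposition 6: with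
`u(t) = 1+2t⁴+2t⁸` and `w(t) = (1+(n-3)t⁴)⁻¹`, for every `t > 0`,
`(n-3)u'/u + 2w'/w > 0`. -/
theorem mean_curvature_positive_case3
    (n : ℕ) (hn : 5 ≤ n) (u w : ℝ → ℝ)
    (hu : u = fun t => 1 + 2 * t ^ 4 + 2 * t ^ 8)
    (hw : w = fun t => (1 + ((n : ℝ) - 3) * t ^ 4)⁻¹)
    (t : ℝ) (ht : 0 < t) :
    0 < ((n : ℝ) - 3) * deriv u t / u t + 2 * deriv w t / w t := by
  set c : ℝ := (n : ℝ) - 3 with hc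
  have hc2 : (2 : ℝ) ≤ c := by
    have : (5 : ℝ) ≤ (n : ℝ) := by exact_mod_cast hn
    simp [hc]; linarith
  have hcpos : 0 < c := by linarith
  have ht4 : 0 < t ^ 4 := by positivity
  have ht8 : 0 < t ^ 8 := by positivity
  have hA : (0 : ℝ) < 1 + 2 * t ^ 4 + 2 * t ^ 8 := by positivity
  have hB : (0 : ℝ) < 1 + c * t ^ 4 := by positivity
  have hBne : (1 + c * t ^ 4) ≠ 0 := ne_of_gt hB
  have hdu : HasDerivAt u (8 * t ^ 3 + 16 * t ^ 7) t := by
    subst hu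
    have h1 : HasDerivAt (fun x : ℝ => 1 + 2 * x ^ 4 + 2 * x ^ 8)
        (2 * ((4 : ℕ) * t ^ 3) + 2 * ((8 : ℕ) * t ^ 7)) t :=
      (((hasDerivAt_pow 4 t).const_mul 2).const_add 1).add
        ((hasDerivAt_pow 8 t).const_mul 2)
    convert h1 using 1
    push_cast
    ring
  have hg : HasDerivAt (fun x : ℝ => 1 + c * x ^ 4) (c * ((4 : ℕ) * t ^ 3)) t :=
    ((hasDerivAt_pow 4 t).const_mul c).const_add 1
  have hdw : HasDerivAt w (-(c * (4 * t ^ 3)) / (1 + c * t ^ 4) ^ 2) t := by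
    subst hw
    have := hg.inv hBne
    simp only [Nat.cast_ofNat] at this
    exact this
  rw [hdu.deriv, hdw.deriv]
  simp only [hu, hw]
  have key : c * (8 * t ^ 3 + 16 * t ^ 7) / (1 + 2 * t ^ 4 + 2 * t ^ 8) +
      2 * (-(c * (4 * t ^ 3)) / (1 + c * t ^ 4) ^ 2) / (1 + c * t ^ 4)⁻¹ =
      8 * c * t ^ 3 * (c * t ^ 4 + 2 * (c - 1) * t ^ 8) /
        ((1 + 2 * t ^ 4 + 2 * t ^ 8) * (1 + c * t ^ 4)) := by
    field_simp
    ring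
  rw [key]
  apply div_pos _ (by positivity)
  have hnum : 0 < c * t ^ 4 + 2 * (c - 1) * t ^ 8 := by nlinarith
  positivity
end

section
/- Define u : ℝ → ℝ by u(t) = √(1+t⁴), and define S(t) = 2/u(t)² − 4·u''(t)/u(t) − 2·u'(t)²/u(t)². Then S(0) = 2 and S(t) < 2 for every real t ≠ 0 (in particular for all 0 < |t| < δ for any δ > 0). -/
private lemma pos14 (t : ℝ) : (0:ℝ) < 1 + t ^ 4 := by positivity

private lemma hdA (t : ℝ) :
    HasDerivAt (fun t : ℝ => Real.sqrt (1 + t ^ 4))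
      (2 * t ^ 3 / Real.sqrt (1 + t ^ 4)) t := by
  have inner : HasDerivAt (fun t : ℝ => 1 + t ^ 4) (4 * t ^ 3) t := by
    simpa using (hasDerivAt_pow 4 t).const_add 1
  have h := (Real.hasDerivAt_sqrt (ne_of_gt (pos14 t))).comp t inner
  refine h.congr_deriv ?_
  have hs : Real.sqrt (1 + t ^ 4) ≠ 0 := by positivity
  field_simp
  ring

private lemma deriv_u (t : ℝ) :
    deriv (fun t : ℝ => Real.sqrt (1 + t ^ 4)) t = 2 * t ^ 3 / Real.sqrt (1 + t ^ 4) :=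
  (hdA t).deriv

private lemma hdB (t : ℝ) :
    HasDerivAt (fun t : ℝ => 2 * t ^ 3 / Real.sqrt (1 + t ^ 4))
      ((6 * t ^ 2 * Real.sqrt (1 + t ^ 4)
        - 2 * t ^ 3 * (2 * t ^ 3 / Real.sqrt (1 + t ^ 4))) / (1 + t ^ 4)) t := by
  have num : HasDerivAt (fun t : ℝ => 2 * t ^ 3) (6 * t ^ 2) t := by
    have h := (hasDerivAt_pow 3 t).const_mul (2:ℝ)
    refine h.congr_deriv ?_
    push_cast; ring
  have hs : Real.sqrt (1 + t ^ 4) ≠ 0 := by positivity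
  have h := num.div (hdA t) hs
  refine h.congr_deriv ?_
  rw [Real.sq_sqrt (le_of_lt (pos14 t))]

/-- For `u(t) = √(1+t⁴)`, the scalar curvature `S(t) = 2/u² - 4u''/u - 2u'²/u²`
of `S² × (-ε,ε)` with metric `(1+t⁴)ds² + dt²` equals `2` at `t = 0` and is
strictly less than `2` for all `t ≠ 0`. -/
theorem scalar_curvature_decreases_example
    (u S : ℝ → ℝ)
    (hu : u = fun t => Real.sqrt (1 + t ^ 4))
    (hS : S = fun t =>
      2 / (u t) ^ 2 - 4 * deriv (deriv u) t / u t - 2 * (deriv u t) ^ 2 / (u t) ^ 2) :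
    S 0 = 2 ∧ ∀ t : ℝ, t ≠ 0 → S t < 2 := by
  subst hu hS
  have hd1 : deriv (fun t : ℝ => Real.sqrt (1 + t ^ 4))
      = fun t : ℝ => 2 * t ^ 3 / Real.sqrt (1 + t ^ 4) := funext deriv_u
  have key : ∀ t : ℝ,
      (2 / (Real.sqrt (1 + t ^ 4)) ^ 2
        - 4 * deriv (deriv (fun t : ℝ => Real.sqrt (1 + t ^ 4))) t / Real.sqrt (1 + t ^ 4)
        - 2 * (deriv (fun t : ℝ => Real.sqrt (1 + t ^ 4)) t) ^ 2 / (Real.sqrt (1 + t ^ 4)) ^ 2)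
      = (2 + 2 * t ^ 4 - 24 * t ^ 2 - 16 * t ^ 6) / (1 + t ^ 4) ^ 2 := by
    intro t
    rw [hd1, (hdB t).deriv]
    simp only []
    set s := Real.sqrt (1 + t ^ 4) with hsdef
    have hs2 : s ^ 2 = 1 + t ^ 4 := Real.sq_sqrt (le_of_lt (pos14 t))
    have hs0 : (0:ℝ) < s := Real.sqrt_pos.mpr (pos14 t)
    have hne : s ≠ 0 := ne_of_gt hs0
    have hne2 : (1 : ℝ) + t ^ 4 ≠ 0 := ne_of_gt (pos14 t)
    rw [← hs2]
    field_simp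
    linear_combination (2 - 24 * t ^ 2) * hs2
  constructor
  · simp only []
    rw [key 0]; norm_num
  · intro t ht
    simp only []
    rw [key t]
    have h4 : (0:ℝ) < t ^ 2 := by positivity
    rw [div_lt_iff₀ (by positivity)]
    nlinarith [pow_pos h4 2, pow_pos h4 3, sq_nonneg (t^2)]
end
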